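/- Let K/F be a finite Galois extension of fields with Galois group G, and let S be a G-set. Let M be the group of all functions f : S → Kˣ under pointwise multiplication, with G acting by (σ•f)(s) = σ(f(σ⁻¹•s)). Then every multiplicative 1-cocycle of G in M is a 1-coboundary: if c : G → M satisfies c(στ) = c(σ)·(σ•c(τ)) for all σ, τ ∈ G, then there exists f ∈ M with c(σ) = (σ•f)·f⁻¹ for all σ ∈ G. -/

import Mathlib

/-- The action of `σ ∈ Gal(K/F)` on the group of functions `S → Kˣ`:
`(σ • f)(s) = σ(f(σ⁻¹ • s))`. -/
noncomputable def galUnitsAct {F K : Type*} [Field F] [Field K] [Algebra F K]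
    {S : Type*} [MulAction (K ≃ₐ[F] K) S]
    (σ : K ≃ₐ[F] K) (f : S → Kˣ) : S → Kˣ :=
  fun s => Units.map (σ : K →* K) (f (σ⁻¹ • s))

section Aux

open groupCohomology

variable {F K : Type*} [Field F] [Field K] [Algebra F K]
    {S : Type*} [MulAction (K ≃ₐ[F] K) S]

lemma umap_umap (σ τ : K ≃ₐ[F] K) (x : Kˣ) :
    Units.map (σ : K →* K) (Units.map (τ : K →* K) x)
      = Units.map ((σ * τ : K ≃ₐ[F] K) : K →* K) x := by
  ext; rfl

variable [FiniteDimensional F K]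

set_option synthInstance.maxHeartbeats 800000 in
set_option maxHeartbeats 1600000 in
/-- Pointwise Hilbert 90 at the stabilizer of a point. -/
lemma keybeta (c : (K ≃ₐ[F] K) → (S → Kˣ))
    (hc : ∀ σ τ : K ≃ₐ[F] K, c (σ * τ) = c σ * galUnitsAct σ (c τ)) (s₀ : S) :
    ∃ β : Kˣ, ∀ τ : K ≃ₐ[F] K, τ • s₀ = s₀ →
      Units.map (τ : K →* K) β / β = c τ s₀ := by
  set H : Subgroup (K ≃ₐ[F] K) := MulAction.stabilizer (K ≃ₐ[F] K) s₀ with hH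
  set E := IntermediateField.fixedField H with hE
  haveI : FiniteDimensional E K := FiniteDimensional.right F E K
  have hfix : E.fixingSubgroup = H := IntermediateField.fixingSubgroup_fixedField H
  set e := IntermediateField.fixingSubgroupEquiv E with he
  set φ : (K ≃ₐ[E] K) → Kˣ := fun g => c ((e.symm g : E.fixingSubgroup) : K ≃ₐ[F] K) s₀
    with hφdef
  have hmem : ∀ g : K ≃ₐ[E] K, ((e.symm g : E.fixingSubgroup) : K ≃ₐ[F] K) • s₀ = s₀ := by
    intro g
    have h1 : ((e.symm g : E.fixingSubgroup) : K ≃ₐ[F] K) ∈ H := hfix ▸ (e.symm g).2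
    exact h1
  have hcoe : ∀ (g : K ≃ₐ[E] K) (x : Kˣ),
      Units.map (((e.symm g : E.fixingSubgroup) : K ≃ₐ[F] K) : K →* K) x
        = Units.map (g : K →* K) x := fun g x => by ext; rfl
  have hφ : IsMulCocycle₁ φ := by
    intro g h
    have h1 : ((e.symm (g * h) : E.fixingSubgroup) : K ≃ₐ[F] K)
        = ((e.symm g : E.fixingSubgroup) : K ≃ₐ[F] K)
          * ((e.symm h : E.fixingSubgroup) : K ≃ₐ[F] K) := by
      rw [map_mul]; rfl
    have h2 : ((e.symm g : E.fixingSubgroup) : K ≃ₐ[F] K)⁻¹ • s₀ = s₀ :=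
      inv_smul_eq_iff.mpr (hmem g).symm
    simp only [hφdef, h1, hc, Pi.mul_apply, galUnitsAct, h2, hcoe,
      AlgEquiv.smul_units_def]
    exact mul_comm _ _
  obtain ⟨β, hβ⟩ := isMulCoboundary₁_of_isMulCocycle₁_of_aut_to_units φ hφ
  refine ⟨β, fun τ hτ => ?_⟩
  have hτ' : τ ∈ E.fixingSubgroup := by rw [hfix]; exact hτ
  have h3 := hβ (e ⟨τ, hτ'⟩)
  rw [AlgEquiv.smul_units_def] at h3
  have h4 : Units.map ((e ⟨τ, hτ'⟩ : K ≃ₐ[E] K) : K →* K) β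
      = Units.map (τ : K →* K) β := by ext; rfl
  rw [h4] at h3
  rw [h3, hφdef]
  show c ((e.symm (e ⟨τ, hτ'⟩) : E.fixingSubgroup) : K ≃ₐ[F] K) s₀ = c τ s₀
  rw [e.symm_apply_apply]

end Aux

/-- Vanishing of `H¹(Gal(K/F), Hom(ℤ[S], Kˣ))` for a finite Galois extension `K/F` and
a `Gal(K/F)`-set `S`: every `1`-cocycle with values in the group of `Kˣ`-valued
functions on `S` is a `1`-coboundary. -/
theorem stmt15 {F K : Type*} [Field F] [Field K] [Algebra F K]
    [FiniteDimensional F K] [IsGalois F K]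
    {S : Type*} [MulAction (K ≃ₐ[F] K) S]
    (c : (K ≃ₐ[F] K) → (S → Kˣ))
    (hc : ∀ σ τ : K ≃ₐ[F] K, c (σ * τ) = c σ * galUnitsAct σ (c τ)) :
    ∃ f : S → Kˣ, ∀ σ : K ≃ₐ[F] K, c σ = galUnitsAct σ f * f⁻¹ := by
  classical
  set Q : Setoid S := MulAction.orbitRel (K ≃ₐ[F] K) S with hQ
  set rep : S → S := fun s => (Quotient.mk Q s).out with hrepdef
  have hrep_orbit : ∀ s : S, ∃ g : K ≃ₐ[F] K, g • s = rep s := by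
    intro s
    have h := Quotient.mk_out (s := Q) s
    rw [MulAction.orbitRel_apply] at h
    exact MulAction.mem_orbit_iff.mp h
  have hrep_smul : ∀ (σ : K ≃ₐ[F] K) (s : S), rep (σ⁻¹ • s) = rep s := by
    intro σ s
    have h : Quotient.mk Q (σ⁻¹ • s) = Quotient.mk Q s :=
      Quotient.sound (MulAction.orbitRel_apply.mpr (MulAction.mem_orbit s σ⁻¹))
    simp only [hrepdef, h]
  choose β hβ using fun s₀ => keybeta c hc s₀
  choose ρ hρ using hrep_orbit
  -- well-definedness of the local construction
  have wd : ∀ (σ τ : K ≃ₐ[F] K) (s s₀ : S), σ • s = s₀ → τ • s = s₀ →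
      Units.map ((σ⁻¹ : K ≃ₐ[F] K) : K →* K) (c σ s₀ * β s₀)
        = Units.map ((τ⁻¹ : K ≃ₐ[F] K) : K →* K) (c τ s₀ * β s₀) := by
    intro σ τ s s₀ hσ hτ
    have hs : σ⁻¹ • s₀ = s := by rw [← hσ, inv_smul_smul]
    have hh : (τ * σ⁻¹) • s₀ = s₀ := by rw [mul_smul, hs, hτ]
    have hhinv : (τ * σ⁻¹)⁻¹ • s₀ = s₀ := inv_smul_eq_iff.mpr hh.symm
    have h1 := congrFun (hc (τ * σ⁻¹) σ) s₀
    rw [inv_mul_cancel_right] at h1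
    -- h1 : c τ s₀ = c (τ * σ⁻¹) s₀ * Units.map (τ * σ⁻¹) (c σ ((τ*σ⁻¹)⁻¹ • s₀))
    have h2 : c τ s₀ * β s₀
        = Units.map ((τ * σ⁻¹ : K ≃ₐ[F] K) : K →* K) (c σ s₀ * β s₀) := by
      rw [h1]
      simp only [Pi.mul_apply, galUnitsAct, hhinv]
      rw [← hβ s₀ (τ * σ⁻¹) hh, map_mul]
      ext
      simp only [Units.val_mul, Units.coe_map, Units.val_div_eq_div_val]
      field_simp
    rw [h2, umap_umap]
    have hg : (τ⁻¹ * (τ * σ⁻¹) : K ≃ₐ[F] K) = σ⁻¹ := by group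
    rw [hg]
  set f : S → Kˣ := fun s =>
    Units.map (((ρ s)⁻¹ : K ≃ₐ[F] K) : K →* K) (c (ρ s) (rep s) * β (rep s)) with hfdef
  refine ⟨f, fun σ => ?_⟩
  funext s
  have hts : (ρ s * σ) • (σ⁻¹ • s) = rep s := by
    rw [mul_smul, smul_inv_smul, hρ s]
  have hρs' : ρ (σ⁻¹ • s) • (σ⁻¹ • s) = rep s := by
    rw [hρ (σ⁻¹ • s), hrep_smul]
  have hfs : f (σ⁻¹ • s)
      = Units.map (((ρ s * σ)⁻¹ : K ≃ₐ[F] K) : K →* K)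
          (c (ρ s * σ) (rep s) * β (rep s)) := by
    simp only [hfdef, hrep_smul]
    exact wd (ρ (σ⁻¹ • s)) (ρ s * σ) (σ⁻¹ • s) (rep s) hρs' hts
  have hinvsmul : (ρ s)⁻¹ • rep s = s := inv_smul_eq_iff.mpr (hρ s).symm
  have hcρσ : c (ρ s * σ) (rep s)
      = c (ρ s) (rep s) * Units.map ((ρ s : K ≃ₐ[F] K) : K →* K) (c σ s) := by
    have h1 := congrFun (hc (ρ s) σ) (rep s)
    rw [h1]
    simp only [Pi.mul_apply, galUnitsAct, hinvsmul]
  show c σ s = Units.map (σ : K →* K) (f (σ⁻¹ • s)) * (f s)⁻¹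
  rw [hfs, umap_umap, hcρσ]
  have hσρ : (σ * (ρ s * σ)⁻¹ : K ≃ₐ[F] K) = (ρ s)⁻¹ := by group
  rw [hσρ]
  have key : Units.map (((ρ s)⁻¹ : K ≃ₐ[F] K) : K →* K)
      (c (ρ s) (rep s) * Units.map ((ρ s : K ≃ₐ[F] K) : K →* K) (c σ s) * β (rep s))
      = f s * c σ s := by
    simp only [hfdef]
    rw [mul_right_comm (c (ρ s) (rep s)) (Units.map ((ρ s : K ≃ₐ[F] K) : K →* K) (c σ s))
      (β (rep s)), map_mul, umap_umap, inv_mul_cancel]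
    have h1 : Units.map ((1 : K ≃ₐ[F] K) : K →* K) (c σ s) = c σ s := by ext; rfl
    rw [h1]
  rw [key]
  rw [mul_comm (f s), mul_assoc, mul_inv_cancel, mul_one]
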